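/- Let λ ∈ ℝᵏ and let g_1, …, g_k be independent random variables each with the standard Gumbel distribution, i.e., the distribution on ℝ with cumulative distribution function F(x) = exp(−exp(−x)) (equivalently, density exp(−x − exp(−x)) with respect to Lebesgue measure). Then for every j ∈ {1, …, k}, the probability that λ_j + g_j is the unique maximum of (λ_1 + g_1, …, λ_k + g_k) equals the softmax of λ at j: P(λ_j + g_j > λ_i + g_i for all i ≠ j) = exp(λ_j) / Σ_{i=1}^k exp(λ_i). In particular, argmax_i(λ_i + g_i) is a categorical random variable with category probabilities softmax(λ), so λ represents the un-normalized log probabilities of the categories. -/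

import Mathlib

open MeasureTheory ProbabilityTheory
open scoped NNReal ENNReal BigOperators
open Set Filter
open scoped Topology

/-- The standard Gumbel distribution on `ℝ`, with cumulative distribution function
`F(x) = exp(−exp(−x))`, given here by its density `exp(−x − exp(−x))` with respect to Lebesgue
measure. -/
noncomputable def stdGumbel : Measure ℝ :=
  MeasureTheory.volume.withDensity fun x => ENNReal.ofReal (Real.exp (-x - Real.exp (-x)))

lemma gumbel_hasDerivAt (b t : ℝ) :
    HasDerivAt (fun t => Real.exp (-(b * Real.exp (-t))))
      (b * Real.exp (-t - b * Real.exp (-t))) t := by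
  have h1 : HasDerivAt (fun t : ℝ => -t) (-1) t := (hasDerivAt_id t).neg
  have h2 : HasDerivAt (fun t : ℝ => Real.exp (-t)) (-Real.exp (-t)) t := by
    simpa using h1.exp
  have h3 : HasDerivAt (fun t : ℝ => -(b * Real.exp (-t))) (b * Real.exp (-t)) t := by
    exact HasDerivAt.congr_deriv (h2.const_mul b).neg (by ring)
  have h4 := h3.exp
  have : Real.exp (-(b * Real.exp (-t))) * (b * Real.exp (-t))
      = b * Real.exp (-t - b * Real.exp (-t)) := by
    rw [sub_eq_add_neg, Real.exp_add]
    ring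
  simpa [this] using h4

lemma gumbel_bound (b : ℝ) (hb : 0 < b) (t : ℝ) :
    Real.exp (-t - b * Real.exp (-t)) ≤ 4 / b ^ 2 * Real.exp t := by
  have hu : 0 < Real.exp (-t) := Real.exp_pos _
  set u := Real.exp (-t) with hudef
  have h1 : b * u / 2 ≤ Real.exp (b * u / 2) := by
    linarith [Real.add_one_le_exp (b * u / 2)]
  have h2 : u ≤ 2 / b * Real.exp (b * u / 2) := by
    have := mul_le_mul_of_nonneg_right h1 (le_of_lt (show (0:ℝ) < 2 / b by positivity))
    calc u = (b * u / 2) * (2 / b) := by field_simp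
      _ ≤ Real.exp (b * u / 2) * (2 / b) := this
      _ = 2 / b * Real.exp (b * u / 2) := mul_comm _ _
  have hsq : u ^ 2 ≤ 4 / b ^ 2 * Real.exp (b * u) := by
    calc u ^ 2 ≤ (2 / b * Real.exp (b * u / 2)) ^ 2 :=
          pow_le_pow_left₀ hu.le h2 2
      _ = 4 / b ^ 2 * (Real.exp (b * u / 2) * Real.exp (b * u / 2)) := by ring
      _ = 4 / b ^ 2 * Real.exp (b * u) := by
          rw [← Real.exp_add]; ring_nf
  have key : Real.exp (-t - b * u) = u ^ 2 * Real.exp (-b * u) * Real.exp t := by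
    rw [hudef]
    simp only [sq, ← Real.exp_add]
    congr 1
    ring
  rw [key]
  have : u ^ 2 * Real.exp (-b * u) ≤ 4 / b ^ 2 := by
    have := mul_le_mul_of_nonneg_right hsq (Real.exp_pos (-b * u)).le
    calc u ^ 2 * Real.exp (-b * u) ≤ 4 / b ^ 2 * Real.exp (b * u) * Real.exp (-b * u) := this
      _ = 4 / b ^ 2 := by rw [mul_assoc, ← Real.exp_add]; simp
  exact mul_le_mul_of_nonneg_right this (Real.exp_pos t).le

lemma gumbel_integrable {b : ℝ} (hb : 0 < b) :
    Integrable (fun t => Real.exp (-t - b * Real.exp (-t))) := by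
  have hcont : Continuous fun t => Real.exp (-t - b * Real.exp (-t)) := by
    continuity
  rw [← integrableOn_univ, ← Set.Iic_union_Ioi (a := (0:ℝ)), integrableOn_union]
  constructor
  · apply Integrable.mono' ((integrableOn_exp_Iic 0).const_mul (4 / b ^ 2))
      hcont.aestronglyMeasurable.restrict
    filter_upwards with t
    rw [Real.norm_eq_abs, abs_of_pos (Real.exp_pos _)]
    exact gumbel_bound b hb t
  · apply Integrable.mono' (by simpa using (exp_neg_integrableOn_Ioi 0 one_pos).integrable)
      hcont.aestronglyMeasurable.restrict
    filter_upwards with t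
    rw [Real.norm_eq_abs, abs_of_pos (Real.exp_pos _)]
    apply Real.exp_le_exp.mpr
    nlinarith [Real.exp_pos (-t)]

lemma gumbel_integral {b : ℝ} (hb : 0 < b) :
    ∫ t, Real.exp (-t - b * Real.exp (-t)) = 1 / b := by
  have hF : ∀ t, HasDerivAt (fun t => 1 / b * Real.exp (-(b * Real.exp (-t))))
      (Real.exp (-t - b * Real.exp (-t))) t := by
    intro t
    have := (gumbel_hasDerivAt b t).const_mul (1 / b)
    simpa [mul_comm, mul_assoc, mul_left_comm, one_div, inv_mul_cancel_left₀ hb.ne'] using this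
  have hbot : Tendsto (fun t => 1 / b * Real.exp (-(b * Real.exp (-t)))) atBot (𝓝 0) := by
    have h1 : Tendsto (fun t : ℝ => Real.exp (-t)) atBot atTop :=
      Real.tendsto_exp_atTop.comp tendsto_neg_atBot_atTop
    have h2 : Tendsto (fun t : ℝ => -(b * Real.exp (-t))) atBot atBot :=
      tendsto_neg_atTop_atBot.comp (h1.const_mul_atTop hb)
    have h3 : Tendsto (fun t : ℝ => Real.exp (-(b * Real.exp (-t)))) atBot (𝓝 0) :=
      Real.tendsto_exp_atBot.comp h2
    simpa using h3.const_mul (1 / b)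
  have htop : Tendsto (fun t => 1 / b * Real.exp (-(b * Real.exp (-t)))) atTop (𝓝 (1 / b)) := by
    have h1 : Tendsto (fun t : ℝ => Real.exp (-t)) atTop (𝓝 0) :=
      Real.tendsto_exp_atBot.comp tendsto_neg_atTop_atBot
    have h2 : Tendsto (fun t : ℝ => -(b * Real.exp (-t))) atTop (𝓝 0) := by
      simpa using (h1.const_mul b).neg
    have h3 : Tendsto (fun t : ℝ => Real.exp (-(b * Real.exp (-t)))) atTop (𝓝 1) := by
      simpa [Function.comp_def] using (Real.continuous_exp.tendsto 0).comp h2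
    simpa using h3.const_mul (1 / b)
  have := integral_of_hasDerivAt_of_tendsto hF (gumbel_integrable hb) hbot htop
  simpa using this

lemma gumbel_meas (b : ℝ) : Measurable fun t : ℝ => ENNReal.ofReal (Real.exp (-t - b * Real.exp (-t))) := by
  apply ENNReal.measurable_ofReal.comp
  apply Real.measurable_exp.comp
  exact (measurable_id.neg).sub ((measurable_id.neg).exp.const_mul b)

lemma gumbel_lintegral {b : ℝ} (hb : 0 < b) :
    ∫⁻ t, ENNReal.ofReal (Real.exp (-t - b * Real.exp (-t))) = ENNReal.ofReal (1 / b) := by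
  rw [← ofReal_integral_eq_lintegral_ofReal (gumbel_integrable hb)
    (Filter.Eventually.of_forall fun t => (Real.exp_pos _).le), gumbel_integral hb]

instance : IsProbabilityMeasure stdGumbel := by
  constructor
  rw [stdGumbel, withDensity_apply _ MeasurableSet.univ, Measure.restrict_univ]
  have := gumbel_lintegral one_pos
  simp only [one_mul] at this
  rw [this]
  norm_num

lemma stdGumbel_Iio (a : ℝ) :
    stdGumbel (Iio a) = ENNReal.ofReal (Real.exp (-Real.exp (-a))) := by
  rw [stdGumbel, withDensity_apply _ measurableSet_Iio]
  have hint : IntegrableOn (fun t => Real.exp (-t - Real.exp (-t))) (Iio a) := by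
    simpa using (gumbel_integrable one_pos).integrableOn (s := Iio a)
  rw [← ofReal_integral_eq_lintegral_ofReal hint
    (Filter.Eventually.of_forall fun t => (Real.exp_pos _).le)]
  congr 1
  rw [← integral_Iic_eq_integral_Iio]
  have hF : ∀ t ∈ Iic a, HasDerivAt (fun t => Real.exp (-(1 * Real.exp (-t))))
      (Real.exp (-t - Real.exp (-t))) t := by
    intro t _
    simpa using gumbel_hasDerivAt 1 t
  have hbot : Tendsto (fun t => Real.exp (-(1 * Real.exp (-t)))) atBot (𝓝 0) := by
    have h1 : Tendsto (fun t : ℝ => Real.exp (-t)) atBot atTop :=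
      Real.tendsto_exp_atTop.comp tendsto_neg_atBot_atTop
    have h2 : Tendsto (fun t : ℝ => -(1 * Real.exp (-t))) atBot atBot := by
      have h := tendsto_neg_atTop_atBot.comp h1
      simp only [Function.comp_def] at h
      simpa using h
    exact Real.tendsto_exp_atBot.comp h2
  have := integral_Iic_of_hasDerivAt_of_tendsto' hF
    (by simpa using (gumbel_integrable one_pos).integrableOn (s := Iic a)) hbot
  simp only [one_mul] at this
  rw [this, sub_zero]

/-- The Gumbel-max trick: if `g 1, …, g k` are independent standard Gumbel random variables and
`lam ∈ ℝᵏ`, then for every `j`, the probability that `lam j + g j` is the unique maximum of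
`(lam 1 + g 1, …, lam k + g k)` equals the softmax of `lam` at `j`, namely
`exp(lam j) / ∑ i, exp(lam i)`; hence the argmax is a categorical random variable with category
probabilities `softmax lam`, so `lam` represents the un-normalized log probabilities of the
categories. -/
theorem gumbel_max_trick
    {k : ℕ} (hk : 0 < k)
    {Ω : Type*} [MeasureSpace Ω] [IsProbabilityMeasure (ℙ : Measure Ω)]
    (lam : Fin k → ℝ) (g : Fin k → Ω → ℝ)
    (hmeas : ∀ i, Measurable (g i))
    (hindep : iIndepFun g ℙ)
    (hlaw : ∀ i, Measure.map (g i) ℙ = stdGumbel) :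
    ∀ j : Fin k,
      ℙ {ω | ∀ i, i ≠ j → lam i + g i ω < lam j + g j ω}
        = ENNReal.ofReal (Real.exp (lam j) / ∑ i, Real.exp (lam i)) := by
  intro j
  classical
  have hG : Measurable (fun ω i => g i ω) := measurable_pi_lambda _ hmeas
  -- Step A: joint law is the product of Gumbels
  have hmap : Measure.map (fun ω i => g i ω) ℙ = Measure.pi (fun _ : Fin k => stdGumbel) := by
    symm
    apply Measure.pi_eq
    intro s hs
    rw [Measure.map_apply hG (MeasurableSet.univ_pi hs)]
    have hpre : (fun ω i => g i ω) ⁻¹' (Set.pi Set.univ s) = ⋂ i, g i ⁻¹' s i := by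
      ext ω; simp [Set.mem_pi]
    rw [hpre]
    have h1 := hindep.measure_inter_preimage_eq_mul Finset.univ (fun i _ => hs i)
    have h2 : (⋂ i, g i ⁻¹' s i) = ⋂ i ∈ Finset.univ, g i ⁻¹' s i := by simp
    rw [h2, h1]
    refine Finset.prod_congr rfl fun i _ => ?_
    rw [← Measure.map_apply (hmeas i) (hs i), hlaw i]
  -- Step B: rewrite as product-measure of the event
  set S : Set (Fin k → ℝ) := {x | ∀ i, i ≠ j → lam i + x i < lam j + x j} with hSdef
  have hSmeas : MeasurableSet S := by
    have : S = ⋂ i, ⋂ (_ : i ≠ j), {x : Fin k → ℝ | lam i + x i < lam j + x j} := by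
      ext x; simp [hSdef]
    rw [this]
    refine MeasurableSet.iInter fun i => MeasurableSet.iInter fun _ => ?_
    exact measurableSet_lt ((measurable_pi_apply i).const_add _)
      ((measurable_pi_apply j).const_add _)
  have hPS : ℙ {ω | ∀ i, i ≠ j → lam i + g i ω < lam j + g j ω}
      = Measure.pi (fun _ : Fin k => stdGumbel) S := by
    rw [← hmap, Measure.map_apply hG hSmeas]
    rfl
  rw [hPS]
  -- Step C: split off coordinate j
  set p : Fin k → Prop := fun i => i = j with hpdef
  letI : DecidablePred p := fun i => instDecidableEqFin k i j
  letI : Fintype {i // p i} := Subtype.fintype p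
  letI : Fintype {i // ¬p i} := Subtype.fintype _
  letI : Unique {i // p i} :=
    { default := ⟨j, rfl⟩, uniq := fun i => Subtype.ext i.2 }
  set e := MeasurableEquiv.piEquivPiSubtypeProd (fun _ : Fin k => ℝ) p with hedef
  have hmp := measurePreserving_piEquivPiSubtypeProd (fun _ : Fin k => stdGumbel) p
  set A : Set (({i // p i} → ℝ) × ({i // ¬p i} → ℝ)) := e.symm ⁻¹' S with hAdef
  have hA : MeasurableSet A := e.symm.measurable hSmeas
  have hpre' : (⇑(MeasurableEquiv.piEquivPiSubtypeProd (fun _ : Fin k => ℝ) p)) ⁻¹' A = S := by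
    rw [hAdef, ← Set.preimage_comp]
    have hcomp : (⇑e.symm ∘ ⇑e) = id := funext fun x => e.symm_apply_apply x
    rw [show (⇑(MeasurableEquiv.piEquivPiSubtypeProd (fun _ : Fin k => ℝ) p)) = ⇑e from rfl,
      hcomp, Set.preimage_id]
  rw [← hpre', hmp.measure_preimage hA.nullMeasurableSet, Measure.prod_apply hA]
  -- Step D: evaluate the inner measure as a product of CDFs
  set epu := MeasurableEquiv.piUnique (fun _ : {i // p i} => ℝ) with hepu
  have hpu : MeasurePreserving epu (Measure.pi fun _ : {i // p i} => stdGumbel) stdGumbel :=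
    measurePreserving_piUnique _
  have hf : Measurable fun x : {i // p i} → ℝ =>
      (Measure.pi fun _ : {i // ¬p i} => stdGumbel) (Prod.mk x ⁻¹' A) :=
    measurable_measure_prodMk_left hA
  refine Eq.trans (Eq.symm ((MeasurePreserving.symm epu hpu).lintegral_comp hf)) ?_
  have happ : ∀ (t : ℝ) (i : {i // p i}), epu.symm t i = t := by
    intro t i
    rw [Unique.eq_default i]
    exact epu.apply_symm_apply t
  -- Step E: compute the slice and product of CDFs
  set c : ℝ := ∑ i' : {i // ¬p i}, Real.exp (lam i' - lam j) with hcdef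
  have hc : 0 ≤ c := Finset.sum_nonneg fun _ _ => (Real.exp_pos _).le
  have hval : ∀ (z : ({i // p i} → ℝ) × ({i // ¬p i} → ℝ)) (i : Fin k),
      e.symm z i = if h : p i then z.1 ⟨i, h⟩ else z.2 ⟨i, h⟩ := fun z i => rfl
  have hslice : ∀ t : ℝ, (Prod.mk (epu.symm t) ⁻¹' A)
      = Set.pi Set.univ (fun i' : {i // ¬p i} => Iio (lam j + t - lam i')) := by
    intro t
    ext y
    simp only [hAdef, Set.mem_preimage, hSdef, Set.mem_setOf_eq, Set.mem_pi, Set.mem_univ,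
      forall_true_left, Set.mem_Iio]
    have hj' : e.symm (epu.symm t, y) j = t := by
      rw [hval, dif_pos (show p j from rfl)]
      exact happ t _
    constructor
    · rintro h ⟨i, hi⟩
      have h2 := h i hi
      rw [hval, dif_neg hi, hj'] at h2
      simpa using by linarith
    · intro h i hi
      have h2 := h ⟨i, hi⟩
      rw [hval, dif_neg hi, hj']
      linarith [h2]
  have h5 : ∀ t : ℝ, (Measure.pi fun _ : {i // ¬p i} => stdGumbel) (Prod.mk (epu.symm t) ⁻¹' A)
      = ENNReal.ofReal (Real.exp (-(c * Real.exp (-t)))) := by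
    intro t
    rw [hslice t, Measure.pi_pi]
    rw [Finset.prod_congr rfl (fun (i' : {i // ¬p i}) _ => stdGumbel_Iio (lam j + t - lam i'))]
    rw [← ENNReal.ofReal_prod_of_nonneg (fun _ _ => (Real.exp_pos _).le)]
    congr 1
    rw [← Real.exp_sum]
    congr 1
    rw [hcdef, Finset.sum_mul, ← Finset.sum_neg_distrib]
    refine Finset.sum_congr rfl fun i' _ => ?_
    rw [← Real.exp_add]
    congr 1
    ring
  rw [lintegral_congr h5]
  -- Step F: evaluate the Gumbel integral
  have hdens : Measurable fun t : ℝ => ENNReal.ofReal (Real.exp (-t - Real.exp (-t))) :=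
    ENNReal.measurable_ofReal.comp (Real.measurable_exp.comp
      (measurable_id.neg.sub measurable_id.neg.exp))
  have hg2 : Measurable fun t : ℝ => ENNReal.ofReal (Real.exp (-(c * Real.exp (-t)))) :=
    ENNReal.measurable_ofReal.comp (Real.measurable_exp.comp
      ((measurable_id.neg.exp.const_mul c).neg))
  rw [stdGumbel, lintegral_withDensity_eq_lintegral_mul _ hdens hg2]
  have h6 : ∀ t : ℝ, ((fun t => ENNReal.ofReal (Real.exp (-t - Real.exp (-t)))) *
        fun t => ENNReal.ofReal (Real.exp (-(c * Real.exp (-t))))) t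
      = ENNReal.ofReal (Real.exp (-t - (1 + c) * Real.exp (-t))) := by
    intro t
    simp only [Pi.mul_apply]
    rw [← ENNReal.ofReal_mul (Real.exp_pos _).le, ← Real.exp_add]
    congr 1
    ring
  rw [lintegral_congr h6, gumbel_lintegral (by linarith : (0:ℝ) < 1 + c)]
  -- Step G: algebra
  congr 1
  have hc2 : c = ∑ i ∈ Finset.univ.filter (fun i => ¬ p i), Real.exp (lam i - lam j) := by
    rw [hcdef]
    exact (Finset.sum_subtype (Finset.univ.filter (fun i => ¬ p i))
      (fun x => by simp [Finset.mem_filter]) (fun i => Real.exp (lam i - lam j))).symm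
  have hfe : Finset.univ.filter (fun i : Fin k => ¬ p i) = Finset.univ.erase j :=
    Finset.filter_ne' _ _
  have hsum : 1 + c = (∑ i, Real.exp (lam i)) / Real.exp (lam j) := by
    rw [hc2, hfe]
    have h7 : Real.exp (lam j - lam j) + ∑ i ∈ Finset.univ.erase j, Real.exp (lam i - lam j)
        = ∑ i, Real.exp (lam i - lam j) :=
      Finset.add_sum_erase Finset.univ (fun i => Real.exp (lam i - lam j)) (Finset.mem_univ j)
    rw [show (1:ℝ) = Real.exp (lam j - lam j) by rw [sub_self, Real.exp_zero], h7]
    simp_rw [Real.exp_sub]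
    rw [← Finset.sum_div]
  rw [hsum, one_div_div]
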